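/- Let G be a finite group, N a normal subgroup with |N| ≤ m, and K ≤ G with K/N = F(G/N) the Fitting subgroup of G/N. Then the index [K : F(G)] is bounded in terms of m; in fact [K : F(G)] ≤ (m-1)!·m. (Key step: C_K(N) is nilpotent, has index at most |Aut(N)| ≤ (m-1)! in K, and C_K(N) ≤ F(G).) -/

import Mathlib

/-- The Fitting subgroup of a group: the join of all normal nilpotent subgroups. -/
def fittingSubgroup (G : Type*) [Group G] : Subgroup G :=
  ⨆ (N : Subgroup G) (_ : N.Normal) (_ : Group.IsNilpotent N), N

open Subgroup

theorem le_fittingSubgroup {G : Type*} [Group G] (H : Subgroup G) (h1 : H.Normal)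
    (h2 : Group.IsNilpotent H) : H ≤ fittingSubgroup G := by
  refine le_trans ?_ (le_iSup _ H)
  rw [iSup_pos h1, iSup_pos h2]

theorem fittingSubgroup_normal (G : Type*) [Group G] : (fittingSubgroup G).Normal := by
  constructor
  intro n hn g
  revert hn
  refine fun hn => Subgroup.iSup_induction _ (C := fun x => g * x * g⁻¹ ∈ fittingSubgroup G)
      hn (fun H x hx => ?_) (by simpa using (fittingSubgroup G).one_mem) ?_
  · by_cases h1 : H.Normal
    · rw [iSup_pos h1] at hx
      by_cases h2 : Group.IsNilpotent H
      · rw [iSup_pos h2] at hx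
        have hle : H.map (MulAut.conj g).toMonoidHom ≤ fittingSubgroup G := by
          apply le_fittingSubgroup
          · exact h1.map _ (MulAut.conj g).surjective
          · haveI := h2
            exact nilpotent_of_mulEquiv
              (Subgroup.equivMapOfInjective H _ (MulAut.conj g).injective)
        exact hle ⟨x, hx, rfl⟩
      · rw [iSup_neg h2] at hx
        simp only [Subgroup.mem_bot] at hx
        simpa [hx] using (fittingSubgroup G).one_mem
    · rw [iSup_neg h1] at hx
      simp only [Subgroup.mem_bot] at hx
      simpa [hx] using (fittingSubgroup G).one_mem
  · intro x y hx hy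
    have : g * (x * y) * g⁻¹ = (g * x * g⁻¹) * (g * y * g⁻¹) := by group
    rw [this]
    exact mul_mem hx hy

/-- A characteristic subgroup of a normal subgroup is normal. -/
theorem map_subtype_normal_of_characteristic {G : Type*} [Group G] (H : Subgroup G) [H.Normal]
    (K : Subgroup H) [K.Characteristic] : (K.map H.subtype).Normal := by
  constructor
  rintro _ ⟨k, hk, rfl⟩ g
  have hmem : MulAut.conjNormal g k ∈ K :=
    Subgroup.characteristic_iff_le_comap.mp ‹K.Characteristic› (MulAut.conjNormal g) hk
  refine ⟨MulAut.conjNormal g k, hmem, ?_⟩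
  simp [MulAut.conjNormal_apply]

/-- In a finite group, the Sylow subgroups generate the whole group. -/
theorem iSup_sylow_eq_top (X : Type*) [Group X] [Finite X] :
    ⨆ q : (Nat.card X).primeFactors, ((default : Sylow q X) : Subgroup X) = ⊤ := by
  classical
  set S := ⨆ q : (Nat.card X).primeFactors, ((default : Sylow q X) : Subgroup X) with hS
  have hcard : Nat.card X ≠ 0 := Nat.card_pos.ne'
  have hcardS : Nat.card S ≠ 0 := Nat.card_pos.ne'
  have hdvd : Nat.card X ∣ Nat.card S := by
    rw [← Nat.factorization_le_iff_dvd hcard hcardS]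
    intro p
    by_cases hp : p ∈ (Nat.card X).primeFactors
    · haveI : Fact p.Prime := ⟨Nat.prime_of_mem_primeFactors hp⟩
      have hle : ((default : Sylow p X) : Subgroup X) ≤ S :=
        le_iSup (fun q : (Nat.card X).primeFactors => ((default : Sylow q X) : Subgroup X))
          ⟨p, hp⟩
      have h1 : (p : ℕ) ^ (Nat.card X).factorization p ∣ Nat.card S := by
        rw [← Sylow.card_eq_multiplicity (default : Sylow p X)]
        exact Subgroup.card_dvd_of_le hle
      exact (Nat.Prime.pow_dvd_iff_le_factorization ‹Fact p.Prime›.out hcardS).mp h1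
    · have : (Nat.card X).factorization p = 0 := by
        rw [← Nat.support_factorization] at hp
        exact Finsupp.notMem_support_iff.mp hp
      simp [this]
  exact Subgroup.eq_top_of_card_eq S (Nat.dvd_antisymm (Subgroup.card_subgroup_dvd_card S) hdvd)

/-- Fitting's theorem for finite groups: the Fitting subgroup is nilpotent. -/
theorem fittingSubgroup_isNilpotent (G : Type*) [Group G] [Finite G] :
    Group.IsNilpotent (fittingSubgroup G) := by
  classical
  -- existence of a largest normal p-subgroup
  have hmax : ∀ p : ℕ, Fact p.Prime → ∃ M : Subgroup G, M.Normal ∧ IsPGroup p M ∧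
      ∀ P : Subgroup G, P.Normal → IsPGroup p P → P ≤ M := by
    intro p hp
    haveI := hp
    obtain ⟨M, hMs, hMmax⟩ := Set.Finite.exists_maximalFor id
      {P : Subgroup G | P.Normal ∧ IsPGroup p P} (Set.toFinite _)
      ⟨⊥, inferInstance, IsPGroup.of_bot⟩
    refine ⟨M, hMs.1, hMs.2, fun P h1 h2 => ?_⟩
    haveI := hMs.1
    haveI := h1
    have hsup : P ⊔ M ∈ {P : Subgroup G | P.Normal ∧ IsPGroup p P} :=
      ⟨Subgroup.sup_normal P M, IsPGroup.to_sup_of_normal_right h2 hMs.2⟩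
    have heq : M = P ⊔ M := le_antisymm le_sup_right (hMmax hsup le_sup_right)
    exact le_sup_left.trans heq.symm.le
  set ps := (Nat.card G).primeFactors
  have hfact : ∀ i : ps, Fact (Nat.Prime i.1) := fun i => ⟨Nat.prime_of_mem_primeFactors i.2⟩
  choose O hO1 hO2 hO3 using fun i : ps => hmax i.1 (hfact i)
  have hcomm : Pairwise fun i j : ps => ∀ x y : G, x ∈ O i → y ∈ O j → Commute x y := by
    intro i j hij
    haveI := hfact i
    haveI := hfact j
    have hne : (i : ℕ) ≠ (j : ℕ) := fun h => hij (Subtype.ext h)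
    have hd : Disjoint (O i) (O j) :=
      IsPGroup.disjoint_of_ne i.1 j.1 hne _ _ (hO2 i) (hO2 j)
    exact Subgroup.commute_of_normal_of_disjoint _ _ (hO1 i) (hO1 j) hd
  let f := Subgroup.noncommPiCoprod hcomm
  have hrange : f.range = ⨆ i, O i := Subgroup.noncommPiCoprod_range
  haveI : ∀ i : ps, Group.IsNilpotent (O i) := fun i => by
    haveI := hfact i
    exact (hO2 i).isNilpotent
  have hnil : Group.IsNilpotent f.range :=
    nilpotent_of_surjective f.rangeRestrict f.rangeRestrict_surjective
  have hFS : fittingSubgroup G = f.range := by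
    rw [hrange]
    apply le_antisymm
    · refine iSup_le fun H => iSup_le fun h1 => iSup_le fun h2 => ?_
      haveI := h1
      haveI := h2
      have hsyl : ∀ (q : ℕ) (_ : Fact q.Prime) (Q : Sylow q H), (Q : Subgroup H).Normal :=
        ((isNilpotent_of_finite_tfae (G := H)).out 0 3).mp h2
      have hHtop : H = Subgroup.map H.subtype ⊤ := by
        rw [← MonoidHom.range_eq_map, Subgroup.range_subtype]
      rw [hHtop, ← iSup_sylow_eq_top H, Subgroup.map_iSup]
      refine iSup_le fun q => ?_
      haveI : Fact (Nat.Prime q.1) := ⟨Nat.prime_of_mem_primeFactors q.2⟩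
      have hq : (q : ℕ) ∈ ps := by
        refine Nat.mem_primeFactors.mpr ⟨‹Fact (Nat.Prime q.1)›.out, ?_, Nat.card_pos.ne'⟩
        exact dvd_trans (Nat.dvd_of_mem_primeFactors q.2) (Subgroup.card_subgroup_dvd_card H)
      refine le_trans ?_ (le_iSup O (⟨q.1, hq⟩ : ps))
      haveI hQn : ((default : Sylow q H) : Subgroup H).Normal := hsyl q.1 ‹_› _
      haveI : ((default : Sylow q H) : Subgroup H).Characteristic :=
        Sylow.characteristic_of_normal _ hQn
      refine hO3 _ _ ?_ ?_
      · exact map_subtype_normal_of_characteristic H _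
      · exact (default : Sylow q H).isPGroup'.map _
    · refine iSup_le fun i => le_fittingSubgroup _ (hO1 i) ?_
      haveI := hfact i
      exact (hO2 i).isNilpotent
  rw [hFS]
  exact hnil

/-- If `N ⊴ G` with `|N| ≤ m` and `K` is the preimage in `G` of the
Fitting subgroup of `G/N`, then `[K : F(G)] ≤ (m-1)!·m`. -/
theorem stmt_11 {G : Type*} [Group G] [Finite G] (m : ℕ)
    (N : Subgroup G) [N.Normal] (hN : Nat.card N ≤ m)
    (K : Subgroup G)
    (hK : K = (fittingSubgroup (G ⧸ N)).comap (QuotientGroup.mk' N)) :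
    (fittingSubgroup G).relIndex K ≤ (m - 1).factorial * m := by
  classical
  set Q : G →* MulAut N := MulAut.conjNormal with hQ
  set C : Subgroup G := Q.ker ⊓ K with hC
  -- C is nilpotent
  have hCnil : Group.IsNilpotent C := by
    have hmem : ∀ c : C, (QuotientGroup.mk' N) (c : G) ∈ fittingSubgroup (G ⧸ N) := by
      intro c
      have : (c : G) ∈ K := c.2.2
      rw [hK] at this
      exact this
    refine @_root_.isNilpotent_of_ker_le_center _ _ _ _
      (MonoidHom.codRestrict ((QuotientGroup.mk' N).comp C.subtype) _ hmem) ?_ ?_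
    · intro x hx
      have hx1 : QuotientGroup.mk' N (x : G) = 1 := by
        have h0 := congrArg Subtype.val (MonoidHom.mem_ker.mp hx)
        exact h0
      have hxN : (x : G) ∈ N := by
        simpa [QuotientGroup.eq_one_iff] using hx1
      rw [Subgroup.mem_center_iff]
      intro y
      have hyk : Q (y : G) = 1 := y.2.1
      have h1 : ((Q (y : G)) ⟨(x : G), hxN⟩ : G) = (y : G) * (x : G) * (y : G)⁻¹ := by
        rw [hQ]; simp [MulAut.conjNormal_apply]
      rw [hyk] at h1
      simp only [MulAut.one_apply] at h1
      refine Subtype.ext ?_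
      push_cast
      conv_rhs => rw [h1]
      group
    · exact fittingSubgroup_isNilpotent (G ⧸ N)
  -- C is normal
  haveI hKn : K.Normal := by
    rw [hK]
    exact (fittingSubgroup_normal (G ⧸ N)).comap _
  haveI hCn : C.Normal := Subgroup.normal_inf_normal _ _
  have hCF : C ≤ fittingSubgroup G := le_fittingSubgroup C hCn hCnil
  -- index computations
  haveI : Finite (MulAut N) := Finite.of_injective _ MulEquiv.toEquiv_injective
  have h2 : C.relIndex K = Q.ker.relIndex K := Subgroup.inf_relIndex_right Q.ker K
  have h3 : Q.ker.relIndex K = Nat.card (K.map Q) := Subgroup.relIndex_ker (K := K) Q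
  have hpos : 0 < C.relIndex K := by
    rw [h2, h3]
    exact Nat.card_pos
  have h1 : (fittingSubgroup G).relIndex K ≤ C.relIndex K :=
    Nat.le_of_dvd hpos (Subgroup.relIndex_dvd_of_le_left K hCF)
  have h4 : Nat.card (K.map Q) ≤ Nat.card (MulAut N) := Subgroup.card_le_card_group _
  have h5 : Nat.card (MulAut N) ≤ Nat.card (Equiv.Perm N) :=
    Nat.card_le_card_of_injective _ MulEquiv.toEquiv_injective
  have h6 : Nat.card (Equiv.Perm N) = (Nat.card N).factorial := by
    letI := Fintype.ofFinite N
    simp [Nat.card_eq_fintype_card, Fintype.card_perm]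
  have hm1 : 1 ≤ m := le_trans Nat.card_pos hN
  have h7 : (Nat.card N).factorial ≤ m.factorial := Nat.factorial_le hN
  have h8 : m.factorial = (m - 1).factorial * m := by
    obtain ⟨k, rfl⟩ := Nat.exists_eq_add_of_le hm1
    simp [Nat.factorial_succ, Nat.mul_comm, Nat.add_comm]
  calc (fittingSubgroup G).relIndex K ≤ C.relIndex K := h1
    _ = Nat.card (K.map Q) := by rw [h2, h3]
    _ ≤ Nat.card (MulAut N) := h4
    _ ≤ Nat.card (Equiv.Perm N) := h5
    _ = (Nat.card N).factorial := h6
    _ ≤ m.factorial := h7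
    _ = (m - 1).factorial * m := h8
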